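/- In the uniform-channel setting, the state-action cost difference is monotone in the multicast queue (Lemma 3 of the paper): let V : 𝒬 → ℝ be monotone. Then for all Q ∈ 𝒬, all u, v ∈ Fin M with v ≠ u, and Q u < N u (so Q + e_u ∈ 𝒬), one has J_V(Q + e_u, u) − J_V(Q + e_u, v) ≤ J_V(Q, u) − J_V(Q, v), where Q + e_u denotes the state obtained from Q by increasing component u by 1. -/

import Mathlib

open Finset

/-- State space of the uniform-channel multicast MDP: request queue vectors capped by `N`. -/
def QSpace (M : ℕ) (N : Fin M → ℕ) : Type :=
  {Q : Fin M → ℕ // ∀ m, Q m ≤ N m}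

/-- Next state when content `u` is multicast in state `Q` and arrival `a` occurs. -/
def nextQ {M : ℕ} {N : Fin M → ℕ} (Q : QSpace M N) (u : Fin M) (a : Fin M → ℕ) :
    QSpace M N :=
  ⟨fun m => min ((if m = u then 0 else Q.1 m) + a m) (N m), fun _ => min_le_right _ _⟩

/-- Per-stage cost in the uniform case. -/
noncomputable def gCost {M : ℕ} {N : Fin M → ℕ} (wp wf : ℝ) (p f : Fin M → ℝ)
    (Q : QSpace M N) (u : Fin M) : ℝ :=
  (∑ m, (Q.1 m : ℝ)) + wp * p u + wf * f u

/-- State-action cost function `J_V(Q,u)`. -/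
noncomputable def JCost {M : ℕ} {N : Fin M → ℕ} (𝒜 : Finset (Fin M → ℕ))
    (ρ : (Fin M → ℕ) → ℝ) (wp wf : ℝ) (p f : Fin M → ℝ)
    (V : QSpace M N → ℝ) (Q : QSpace M N) (u : Fin M) : ℝ :=
  gCost wp wf p f Q u + ∑ a ∈ 𝒜, ρ a * V (nextQ Q u a)

/-- The state `Q + e_u`: component `u` is increased by 1 (requires `Q u < N u`). -/
def addE {M : ℕ} {N : Fin M → ℕ} (Q : QSpace M N) (u : Fin M) (h : Q.1 u < N u) :
    QSpace M N :=
  ⟨Function.update Q.1 u (Q.1 u + 1), by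
    intro m
    rcases eq_or_ne m u with rfl | hm
    · show Function.update Q.1 m (Q.1 m + 1) m ≤ N m
      rw [Function.update_self]; exact h
    · show Function.update Q.1 u (Q.1 u + 1) m ≤ N m
      rw [Function.update_of_ne hm]; exact Q.2 m⟩

/-- Monotonicity of the state-action cost difference (Lemma 3): for a monotone value
function `V`, `J_V(Q+e_u,u) - J_V(Q+e_u,v) ≤ J_V(Q,u) - J_V(Q,v)` for every `v ≠ u`. -/
theorem J_diff_monotone
    {M : ℕ} (hM : 1 ≤ M) (N : Fin M → ℕ)
    (𝒜 : Finset (Fin M → ℕ)) (ρ : (Fin M → ℕ) → ℝ)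
    (hρ0 : ∀ a ∈ 𝒜, 0 ≤ ρ a) (hρ1 : ∑ a ∈ 𝒜, ρ a = 1)
    (wp wf : ℝ) (p f : Fin M → ℝ)
    (V : QSpace M N → ℝ)
    (hV : ∀ Q₁ Q₂ : QSpace M N, Q₁.1 ≤ Q₂.1 → V Q₁ ≤ V Q₂) :
    ∀ (Q : QSpace M N) (u v : Fin M), v ≠ u → ∀ (h : Q.1 u < N u),
      JCost 𝒜 ρ wp wf p f V (addE Q u h) u - JCost 𝒜 ρ wp wf p f V (addE Q u h) v ≤
        JCost 𝒜 ρ wp wf p f V Q u - JCost 𝒜 ρ wp wf p f V Q v := by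
  intro Q u v hvu h
  have h1 : ∀ a, nextQ (addE Q u h) u a = nextQ Q u a := by
    intro a
    apply Subtype.ext
    funext m
    simp only [nextQ, addE]
    rcases eq_or_ne m u with rfl | hm
    · simp
    · simp [hm, Function.update_of_ne hm]
  have h2 : ∑ a ∈ 𝒜, ρ a * V (nextQ Q v a) ≤
      ∑ a ∈ 𝒜, ρ a * V (nextQ (addE Q u h) v a) := by
    refine Finset.sum_le_sum fun a ha => ?_
    refine mul_le_mul_of_nonneg_left ?_ (hρ0 a ha)
    refine hV _ _ fun m => ?_
    simp only [nextQ, addE]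
    refine min_le_min (Nat.add_le_add_right ?_ _) le_rfl
    rcases eq_or_ne m v with rfl | hm
    · simp
    · simp only [if_neg hm, Function.update_apply]
      split <;> simp_all
  have h3 : ∑ m, ((addE Q u h).1 m : ℝ) = (∑ m, (Q.1 m : ℝ)) + 1 := by
    have : ∑ m, (addE Q u h).1 m = (∑ m, Q.1 m) + 1 := by
      simp only [addE]
      rw [Finset.sum_update_of_mem (Finset.mem_univ u), Finset.sdiff_singleton_eq_erase,
        ← Finset.sum_erase_add _ _ (Finset.mem_univ u)]
      ring
    exact_mod_cast this
  simp only [JCost, gCost, h1, h3]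
  linarith
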